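/- Let G be a connected graph and U ⊆ V a modulator to cluster graph (G − U is a disjoint union of cliques), with U nonempty. If there is a shortest path P in G with ecc_G(P) = k, then there is a shortest path P' containing at least one vertex of U with ecc_G(P') ≤ max{k, 1}. -/

import Mathlib

open SimpleGraph

/-- `U` is a modulator to cluster graph: every connected component of `G - U` is a clique. -/
def IsClusterModulator {V : Type*} (G : SimpleGraph V) (U : Set V) : Prop :=
  ∀ u v : ↥Uᶜ, (G.induce Uᶜ).Reachable u v → u ≠ v → (G.induce Uᶜ).Adj u v

/-- distance from a vertex to a set of vertices -/
noncomputable def dset {V : Type*} (G : SimpleGraph V) (u : V) (S : Set V) : ℕ∞ :=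
  ⨅ s ∈ S, G.edist u s

/-- eccentricity of a set of vertices -/
noncomputable def eccSet {V : Type*} (G : SimpleGraph V) (S : Set V) : ℕ∞ :=
  ⨆ u, dset G u S

lemma eccSet_le_iff {V : Type*} {G : SimpleGraph V} {S : Set V} {C : ℕ∞} :
    eccSet G S ≤ C ↔ ∀ z, dset G z S ≤ C := by
  unfold eccSet; exact iSup_le_iff

lemma dset_le_edist {V : Type*} {G : SimpleGraph V} {S : Set V} {z s : V} (hs : s ∈ S) :
    dset G z S ≤ G.edist z s := by
  unfold dset; exact iInf₂_le s hs

lemma exists_le_of_dset_le {V : Type*} {G : SimpleGraph V} {z : V} {S : Set V} {k : ℕ}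
    (h : dset G z S ≤ (k : ℕ∞)) : ∃ s ∈ S, G.edist z s ≤ (k : ℕ∞) := by
  by_contra hc
  push_neg at hc
  have h1 : ((k : ℕ∞) + 1) ≤ dset G z S := by
    unfold dset
    exact le_iInf₂ fun s hs => Order.add_one_le_of_lt (hc s hs)
  have h2 : (k : ℕ∞) + 1 ≤ (k : ℕ∞) := h1.trans h
  have h3 : (k : ℕ∞) < (k : ℕ∞) + 1 := by
    rw [show ((k : ℕ∞) + 1) = ((k + 1 : ℕ) : ℕ∞) by push_cast; ring]
    exact_mod_cast Nat.lt_succ_self k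
  exact absurd h2 (not_le.mpr h3)

lemma aux_reach {V : Type*} {G : SimpleGraph V} {U : Set V} :
    ∀ {x y : V} (W : G.Walk x y), (∀ s ∈ W.support, s ∈ Uᶜ) →
      ∀ (hx : x ∈ Uᶜ) (hy : y ∈ Uᶜ), (G.induce Uᶜ).Reachable ⟨x, hx⟩ ⟨y, hy⟩
  | _, _, SimpleGraph.Walk.nil, _, _, _ => by rfl
  | x, y, SimpleGraph.Walk.cons (v := c) hadj p, h, hx, hy => by
    have hmid : c ∈ Uᶜ := h c (by simp)
    have h' : ∀ s ∈ p.support, s ∈ Uᶜ := fun s hs => h s (by simp [hs])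
    have e1 : (G.induce Uᶜ).Adj ⟨x, hx⟩ ⟨_, hmid⟩ := hadj
    exact e1.reachable.trans (aux_reach p h' hmid hy)

lemma support_cases_of_length_le_one {V : Type*} {G : SimpleGraph V} {a b : V}
    (P : G.Walk a b) (h : P.length ≤ 1) : ∀ s ∈ P.support, s = a ∨ s = b := by
  cases P with
  | nil => simp
  | cons had q =>
    cases q with
    | nil => intro s hs; simpa using hs
    | cons had' q' => simp [SimpleGraph.Walk.length_cons] at h

/-- If `G` is connected with nonempty modulator to cluster graph `U` and there is
a shortest path `P` with `ecc_G(P) = k`, then there is a shortest path `P'` containing a vertex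
of `U` with `ecc_G(P') ≤ max k 1`. -/
theorem stmt5 {V : Type*} [Fintype V] (G : SimpleGraph V) (hG : G.Connected)
    (U : Set V) (hU : IsClusterModulator G U) (hUne : U.Nonempty) (k : ℕ)
    {a b : V} (P : G.Walk a b) (hP : P.IsPath) (hs : P.length = G.dist a b)
    (hecc : eccSet G {x | x ∈ P.support} = (k : ℕ∞)) :
    ∃ (a' b' : V) (P' : G.Walk a' b'), P'.IsPath ∧ P'.length = G.dist a' b' ∧
      (∃ u ∈ U, u ∈ P'.support) ∧
      eccSet G {x | x ∈ P'.support} ≤ ((max k 1 : ℕ) : ℕ∞) := by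
  classical
  have hkK : (k : ℕ∞) ≤ ((max k 1 : ℕ) : ℕ∞) := Nat.cast_le.mpr (le_max_left k 1)
  by_cases hcase : ∃ u ∈ U, u ∈ P.support
  · exact ⟨a, b, P, hP, hs, hcase, hecc.le.trans hkK⟩
  · push_neg at hcase
    have hsupp : ∀ s ∈ P.support, s ∈ Uᶜ := fun s hsm hsU => hcase s hsU hsm
    have ha : a ∈ Uᶜ := hsupp a P.start_mem_support
    have hb : b ∈ Uᶜ := hsupp b P.end_mem_support
    have hd : ∀ z, dset G z {x | x ∈ P.support} ≤ (k : ℕ∞) := by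
      intro z
      have : dset G z {x | x ∈ P.support} ≤ eccSet G {x | x ∈ P.support} :=
        le_iSup (fun u => dset G u {x | x ∈ P.support}) z
      exact this.trans hecc.le
    have hab : a = b ∨ G.Adj a b := by
      rcases eq_or_ne a b with h | h
      · exact Or.inl h
      · right
        have := hU ⟨a, ha⟩ ⟨b, hb⟩ (aux_reach P hsupp ha hb)
          (by simp only [ne_eq, Subtype.mk.injEq]; exact h)
        exact this
    have hlen1 : P.length ≤ 1 := by
      rcases hab with rfl | hadj
      · rw [hs, SimpleGraph.dist_self]; omega
      · rw [hs, SimpleGraph.dist_eq_one_iff_adj.mpr hadj]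
    have hsab : ∀ s ∈ P.support, s = a ∨ s = b := support_cases_of_length_le_one P hlen1
    have hdis : ∀ z, G.edist z a ≤ (k : ℕ∞) ∨ G.edist z b ≤ (k : ℕ∞) := by
      intro z
      obtain ⟨s, hsmem, hse⟩ := exists_le_of_dset_le (hd z)
      rcases hsab s hsmem with rfl | rfl
      · exact Or.inl hse
      · exact Or.inr hse
    by_cases hclose : ∀ z, G.edist z a ≤ ((max k 1 : ℕ) : ℕ∞)
    · obtain ⟨u, hu⟩ := hUne
      obtain ⟨Q, hQp, hQl⟩ := hG.exists_path_of_dist a u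
      refine ⟨a, u, Q, hQp, hQl, ⟨u, hu, Q.end_mem_support⟩, ?_⟩
      rw [eccSet_le_iff]
      intro z
      exact (dset_le_edist (by simpa using Q.start_mem_support)).trans (hclose z)
    · push_neg at hclose
      obtain ⟨x, hx⟩ := hclose
      have hxb : G.edist x b ≤ (k : ℕ∞) :=
        (hdis x).resolve_left (fun h => absurd (h.trans hkK) (not_le.mpr hx))
      have hne : a ≠ b := by
        rintro rfl
        exact absurd (hxb.trans hkK) (not_le.mpr hx)
      have hadj : G.Adj a b := hab.resolve_left hne
      obtain ⟨m, rfl⟩ : ∃ m, k = m + 1 := by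
        cases k with
        | zero =>
          exfalso
          have hxb' : x = b := by simpa using hxb
          subst hxb'
          have h1 : G.edist x a = 1 := SimpleGraph.edist_eq_one_iff_adj.mpr hadj.symm
          have : G.edist x a ≤ ((max 0 1 : ℕ) : ℕ∞) := by rw [h1]; simp
          exact absurd this (not_le.mpr hx)
        | succ m => exact ⟨m, rfl⟩
      have hKval : ((max (m + 1) 1 : ℕ) : ℕ∞) = ((m + 1 : ℕ) : ℕ∞) := by
        norm_num
      rw [hKval] at hx
      -- edist x a = m + 2 and edist x b = m + 1
      have h1 : G.edist x a ≤ G.edist x b + 1 := by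
        calc G.edist x a ≤ G.edist x b + G.edist b a := SimpleGraph.edist_triangle
          _ = G.edist x b + 1 := by rw [SimpleGraph.edist_eq_one_iff_adj.mpr hadj.symm]
      have h2 : G.edist x a = ((m + 2 : ℕ) : ℕ∞) := by
        apply le_antisymm
        · calc G.edist x a ≤ G.edist x b + 1 := h1
            _ ≤ ((m + 1 : ℕ) : ℕ∞) + 1 := add_le_add_left hxb 1
            _ = ((m + 2 : ℕ) : ℕ∞) := by push_cast; ring
        · have := Order.add_one_le_of_lt hx
          calc ((m + 2 : ℕ) : ℕ∞) = ((m + 1 : ℕ) : ℕ∞) + 1 := by push_cast; ring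
            _ ≤ G.edist x a := this
      have h3 : G.edist x b = ((m + 1 : ℕ) : ℕ∞) := by
        apply le_antisymm hxb
        have h4 : ((m + 1 : ℕ) : ℕ∞) + 1 ≤ G.edist x b + 1 := by
          rw [show ((m + 1 : ℕ) : ℕ∞) + 1 = ((m + 2 : ℕ) : ℕ∞) by push_cast; ring, ← h2]
          exact h1
        exact (WithTop.add_le_add_iff_right (by simp : (1 : ℕ∞) ≠ ⊤)).mp h4
      have hdxb : G.dist x b = m + 1 := by
        have : G.dist x b = (G.edist x b).toNat := rfl
        rw [this, h3]; exact ENat.toNat_coe _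
      have hdxa : G.dist x a = m + 2 := by
        have : G.dist x a = (G.edist x a).toNat := rfl
        rw [this, h2]; exact ENat.toNat_coe _
      obtain ⟨Q, hQl⟩ := (hG x b).exists_walk_length_eq_dist
      have hQnil : ¬ Q.reverse.Nil := by
        rw [SimpleGraph.Walk.not_nil_iff_lt_length, SimpleGraph.Walk.length_reverse, hQl, hdxb]
        omega
      obtain ⟨w, hbw, Q', hQr⟩ := SimpleGraph.Walk.not_nil_iff.mp hQnil
      have hQ'len : Q'.length = m := by
        have := congrArg SimpleGraph.Walk.length hQr
        rw [SimpleGraph.Walk.length_reverse, SimpleGraph.Walk.length_cons, hQl, hdxb] at this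
        omega
      have hxw : G.edist x w ≤ ((m : ℕ) : ℕ∞) := by
        have h5 := SimpleGraph.Walk.edist_le Q'.reverse
        rw [SimpleGraph.Walk.length_reverse, hQ'len] at h5
        exact h5
      have hwU : w ∈ U := by
        by_contra hw
        have hwc : w ∈ Uᶜ := hw
        have hwa : w ≠ a := by
          rintro rfl
          have : G.edist x w ≤ ((m + 1 : ℕ) : ℕ∞) :=
            hxw.trans (Nat.cast_le.mpr (Nat.le_succ m))
          exact absurd this (not_le.mpr hx)
        have e1 : (G.induce Uᶜ).Adj ⟨w, hwc⟩ ⟨b, hb⟩ := hbw.symm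
        have e2 : (G.induce Uᶜ).Adj ⟨b, hb⟩ ⟨a, ha⟩ := hadj.symm
        have hreach2 : (G.induce Uᶜ).Reachable ⟨w, hwc⟩ ⟨a, ha⟩ :=
          e1.reachable.trans e2.reachable
        have hwa' : (G.induce Uᶜ).Adj ⟨w, hwc⟩ ⟨a, ha⟩ :=
          hU _ _ hreach2 (by simp only [ne_eq, Subtype.mk.injEq]; exact hwa)
        have hGwa : G.Adj w a := hwa'
        have h6 : G.edist x a ≤ ((m + 1 : ℕ) : ℕ∞) := by
          calc G.edist x a ≤ G.edist x w + G.edist w a := SimpleGraph.edist_triangle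
            _ ≤ ((m : ℕ) : ℕ∞) + 1 := by
                rw [SimpleGraph.edist_eq_one_iff_adj.mpr hGwa]
                exact add_le_add_left hxw 1
            _ = ((m + 1 : ℕ) : ℕ∞) := by push_cast; ring
        exact absurd h6 (not_le.mpr hx)
      set P' := Q.concat hadj.symm with hP'def
      have hlenP' : P'.length = m + 2 := by
        rw [hP'def, SimpleGraph.Walk.length_concat, hQl, hdxb]
      have hlen' : P'.length = G.dist x a := by rw [hlenP', hdxa]
      have hbQ : b ∈ Q.support := Q.end_mem_support
      have hwQ : w ∈ Q.support := by
        have : w ∈ Q.reverse.support := by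
          rw [hQr]
          simp [SimpleGraph.Walk.support_cons]
        rwa [SimpleGraph.Walk.support_reverse, List.mem_reverse] at this
      have hsubQ : ∀ s, s ∈ Q.support → s ∈ P'.support := by
        intro s hsm
        rw [hP'def, SimpleGraph.Walk.support_concat]
        simp [hsm]
      refine ⟨x, a, P', P'.isPath_of_length_eq_dist hlen', hlen', ⟨w, hwU, hsubQ w hwQ⟩, ?_⟩
      rw [eccSet_le_iff]
      intro z
      rcases hdis z with h | h
      · have haP' : a ∈ P'.support := P'.end_mem_support
        exact (dset_le_edist (by simpa using haP')).trans (h.trans hkK)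
      · have hbP' : b ∈ P'.support := hsubQ b hbQ
        exact (dset_le_edist (by simpa using hbP')).trans (h.trans hkK)
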